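/- For every word w = w_1⋯w_n over {L,R} and every d ∈ ℤ, P_w(d) = P_{w'}(d), where w' = w_n⋯w_1 is the reversal of w. -/

import Mathlib

/-- The probability mass functions `P t` on ℤ, defined by
`P 1 = δ₀`, `P (2t) = P t`, `P (2t+1) d = ½ P (t+1) (d+1) + ½ P t (d-1)`. -/
noncomputable def P : ℕ → ℤ → ℝ
  | 0, _ => 0
  | 1, d => if d = 0 then 1 else 0
  | (n+2), d =>
      if h : (n + 2) % 2 = 0 then P ((n+2)/2) d
      else (1/2) * P ((n+2)/2 + 1) (d+1) + (1/2) * P ((n+2)/2) (d-1)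
  decreasing_by all_goals omega

/-- Letters of the alphabet. -/
inductive LR | L | R
deriving DecidableEq

/-- One step of the identification of words with odd integers: `L : t ↦ 2t-1`, `R : t ↦ 2t+1`. -/
def LRstep (t : ℕ) : LR → ℕ
  | LR.L => 2 * t - 1
  | LR.R => 2 * t + 1

/-- The odd integer associated to a word over `{L,R}`, starting from 3. -/
def hword (w : List LR) : ℕ := w.foldl LRstep 3

/-! ### Auxiliary development: generating functions in the group algebra ℝ[ℤ] -/

abbrev RR := AddMonoidAlgebra ℝ ℤ

noncomputable def aa : RR := AddMonoidAlgebra.single (-1) (1/2)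
noncomputable def bb : RR := AddMonoidAlgebra.single 1 (1/2)

lemma aa_mul_apply (f : RR) (d : ℤ) : (aa * f).coeff d = (1/2) * f.coeff (d+1) := by
  rw [aa, AddMonoidAlgebra.coeff_single_mul_apply]; ring_nf

lemma bb_mul_apply (f : RR) (d : ℤ) : (bb * f).coeff d = (1/2) * f.coeff (d-1) := by
  rw [bb, AddMonoidAlgebra.coeff_single_mul_apply]; ring_nf

/-- The generating function of `P t`. -/
noncomputable def QQ : ℕ → RR
  | 0 => 0
  | 1 => 1
  | (n+2) =>
      if (n + 2) % 2 = 0 then QQ ((n+2)/2)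
      else aa * QQ ((n+2)/2 + 1) + bb * QQ ((n+2)/2)
  decreasing_by all_goals omega

lemma P_eq_QQ : ∀ t : ℕ, ∀ d : ℤ, P t d = (QQ t).coeff d := by
  intro t
  induction t using Nat.strong_induction_on with
  | _ t ih =>
    match t with
    | 0 => intro d; rw [P, QQ]; simp
    | 1 =>
      intro d
      rw [P, QQ, AddMonoidAlgebra.one_def, AddMonoidAlgebra.coeff_single, Finsupp.single_apply]
      simp [eq_comm]
    | (n+2) =>
      intro d
      rw [P, QQ]
      by_cases h : (n+2) % 2 = 0
      · rw [dif_pos h, if_pos h]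
        exact ih _ (by omega) d
      · rw [dif_neg h, if_neg h, AddMonoidAlgebra.coeff_add, Finsupp.add_apply, aa_mul_apply, bb_mul_apply,
          ih ((n+2)/2 + 1) (by omega) (d+1), ih ((n+2)/2) (by omega) (d-1)]

lemma QQ_two_mul (t : ℕ) (ht : 1 ≤ t) : QQ (2 * t) = QQ t := by
  obtain ⟨s, rfl⟩ : ∃ s, t = s + 1 := ⟨t - 1, by omega⟩
  have h1 : 2 * (s + 1) = (2 * s) + 2 := by ring
  rw [h1, QQ, if_pos (by omega)]
  congr 1
  omega

lemma QQ_odd (t : ℕ) (ht : 1 ≤ t) : QQ (2 * t + 1) = aa * QQ (t + 1) + bb * QQ t := by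
  obtain ⟨s, rfl⟩ : ∃ s, t = s + 1 := ⟨t - 1, by omega⟩
  have h1 : 2 * (s + 1) + 1 = (2 * s + 1) + 2 := by ring
  rw [h1, QQ, if_neg (by omega)]
  have h2 : (2 * s + 1 + 2) / 2 = s + 1 := by omega
  rw [h2]

/-! ### Matrices -/

open Matrix

noncomputable def NN : LR → Matrix (Fin 2) (Fin 2) RR
  | LR.L => !![aa, bb; 0, 1]
  | LR.R => !![1, 0; aa, bb]

noncomputable def KK : Matrix (Fin 2) (Fin 2) RR :=
  !![aa * (aa - 1), aa * bb; aa * bb, bb * (bb - 1)]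

noncomputable def Amat (l : List LR) : Matrix (Fin 2) (Fin 2) RR := (l.map NN).prod

lemma Amat_nil : Amat [] = 1 := rfl

lemma Amat_cons (c : LR) (l : List LR) : Amat (c :: l) = NN c * Amat l := by
  simp [Amat]

lemma Amat_append_singleton (l : List LR) (c : LR) :
    Amat (l ++ [c]) = Amat l * NN c := by
  simp [Amat]

lemma KK_symm : KKᵀ = KK := by
  ext i j
  fin_cases i <;> fin_cases j <;> simp [KK]

lemma NNL_transpose : (NN LR.L)ᵀ = !![aa, 0; bb, 1] := by
  ext i j; fin_cases i <;> fin_cases j <;> rfl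

lemma NNR_transpose : (NN LR.R)ᵀ = !![1, aa; 0, bb] := by
  ext i j; fin_cases i <;> fin_cases j <;> rfl

lemma KK_mul_NN (c : LR) : KK * NN c = (NN c)ᵀ * KK := by
  cases c
  · rw [NNL_transpose]
    ext i j : 1
    fin_cases i <;> fin_cases j <;>
      · simp [KK, NN, Matrix.mul_apply, Fin.sum_univ_two]; ring_nf
  · rw [NNR_transpose]
    ext i j : 1
    fin_cases i <;> fin_cases j <;>
      · simp [KK, NN, Matrix.mul_apply, Fin.sum_univ_two]; ring_nf

lemma KK_mul_Amat (l : List LR) : KK * Amat l = (Amat l.reverse)ᵀ * KK := by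
  induction l with
  | nil => simp [Amat_nil]
  | cons c l ih =>
    rw [Amat_cons, List.reverse_cons, Amat_append_singleton, Matrix.transpose_mul,
      ← Matrix.mul_assoc, KK_mul_NN, Matrix.mul_assoc, ih, Matrix.mul_assoc]

/-! ### The binary-number bookkeeping -/

def num : List LR → ℕ
  | [] => 1
  | LR.L :: l => 2 * num l
  | LR.R :: l => 2 * num l + 1

lemma one_le_num (l : List LR) : 1 ≤ num l := by
  induction l with
  | nil => simp [num]
  | cons c l ih => cases c <;> simp [num] <;> omega

lemma hword_eq (w : List LR) : hword w = 2 * num w.reverse + 1 := by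
  induction w using List.reverseRecOn with
  | nil => rfl
  | append_singleton w c ih =>
    rw [hword, List.foldl_append, List.foldl_cons, List.foldl_nil, ← hword, ih,
      List.reverse_append]
    simp only [List.reverse_singleton, List.singleton_append]
    have h1 := one_le_num w.reverse
    cases c <;> simp [LRstep, num] <;> omega

/-- The vector `(QQ (num l + 1), QQ (num l))` arises as `Amat l` applied to `(1,1)`. -/
lemma Amat_mulVec (l : List LR) :
    (Amat l).mulVec (fun _ => 1) = ![QQ (num l + 1), QQ (num l)] := by
  induction l with
  | nil =>
    have h2 : QQ 2 = QQ 1 := by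
      have := QQ_two_mul 1 le_rfl
      simpa using this
    funext i
    fin_cases i <;>
      simp [Amat_nil, Matrix.mulVec, dotProduct, Fin.sum_univ_two, h2, QQ, num]
  | cons c l ih =>
    have hn := one_le_num l
    rw [Amat_cons, ← Matrix.mulVec_mulVec, ih]
    funext i
    cases c <;> fin_cases i <;>
      simp [NN, num, Matrix.mulVec, dotProduct, Fin.sum_univ_two]
    · rw [show 2 * num l + 1 = 2 * num l + 1 from rfl, QQ_odd (num l) hn]
    · rw [show 2 * num l = 2 * num l from rfl, QQ_two_mul (num l) hn]
    · rw [show 2 * num l + 1 + 1 = 2 * (num l + 1) from by ring, QQ_two_mul (num l + 1) (by omega)]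
    · rw [QQ_odd (num l) hn]

/-- The scalar `1ᵀ (K A_l) 1`, i.e. the sum of all entries of `K * Amat l`. -/
noncomputable def SS (l : List LR) : RR := ∑ i, ∑ j, (KK * Amat l) i j

lemma SS_reverse (l : List LR) : SS l = SS l.reverse := by
  rw [SS, SS, KK_mul_Amat]
  have h : (Amat l.reverse)ᵀ * KK = (KKᵀ * Amat l.reverse)ᵀ := by
    rw [Matrix.transpose_mul, Matrix.transpose_transpose]
  rw [h, KK_symm]
  simp only [Matrix.transpose_apply]
  rw [Finset.sum_comm]

lemma SS_eq (l : List LR) : SS l = (aa + bb - 1) * QQ (2 * num l + 1) := by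
  have h := Amat_mulVec l
  have h0 : Amat l 0 0 + Amat l 0 1 = QQ (num l + 1) := by
    have := congrFun h 0
    simpa [Matrix.mulVec, dotProduct, Fin.sum_univ_two] using this
  have h1 : Amat l 1 0 + Amat l 1 1 = QQ (num l) := by
    have := congrFun h 1
    simpa [Matrix.mulVec, dotProduct, Fin.sum_univ_two] using this
  rw [QQ_odd (num l) (one_le_num l)]
  rw [SS]
  simp [Fin.sum_univ_two, Matrix.mul_apply, KK]
  linear_combination (aa * (aa - 1) + aa * bb) * h0 + (aa * bb + bb * (bb - 1)) * h1

lemma cc_ne_zero : (aa + bb - 1 : RR) ≠ 0 := by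
  intro h
  have h2 : (aa + bb - 1).coeff 1 = (0 : RR).coeff 1 := by rw [h]
  rw [AddMonoidAlgebra.coeff_sub, Finsupp.sub_apply, AddMonoidAlgebra.coeff_add, Finsupp.add_apply, AddMonoidAlgebra.one_def, aa, bb, AddMonoidAlgebra.coeff_single, AddMonoidAlgebra.coeff_single, AddMonoidAlgebra.coeff_single] at h2
  simp only [Finsupp.single_apply, Finsupp.coe_zero, Pi.zero_apply] at h2
  norm_num at h2

lemma QQ_num_reverse (l : List LR) : QQ (2 * num l + 1) = QQ (2 * num l.reverse + 1) := by
  have h := (SS_eq l).symm.trans ((SS_reverse l).trans (SS_eq l.reverse))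
  exact mul_left_cancel₀ cc_ne_zero h

/-- Reversal symmetry: `P_w(d) = P_{w'}(d)`, where `w'` is the reversal of `w`. -/
theorem P_word_reverse (w : List LR) (d : ℤ) :
    P (hword w) d = P (hword w.reverse) d := by
  rw [P_eq_QQ, P_eq_QQ, hword_eq w, hword_eq w.reverse, List.reverse_reverse]
  rw [QQ_num_reverse w.reverse, List.reverse_reverse]
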